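/- Let q ≥ 1 and τ ≥ 1, and let B : ℕ → ℕ with B i < 2^τ for all i. Define P'(i) = (∑_{j=0}^{i} 2^((i-j)·τ) · B j) mod q, with the convention P'(-1) = 0 (i.e., for i = 0 the previous value is 0), and define D(i) = ⌊B i / q⌋. If 2^(τ-1) ≤ q < 2^τ, then for all i, B i = ((P'(i) - 2^τ · P'(i-1)) mod q) + D(i) · q. -/

import Mathlib

theorem stmt_1 (q τ : ℕ) (hτ : 1 ≤ τ) (hq1 : 2 ^ (τ - 1) ≤ q) (hq2 : q < 2 ^ τ)
    (B : ℕ → ℕ) (hB : ∀ i, B i < 2 ^ τ)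
    (P' : ℕ → ℕ)
    (hP' : ∀ i, P' i = (∑ j ∈ Finset.range (i + 1), 2 ^ ((i - j) * τ) * B j) % q)
    (D : ℕ → ℕ) (hD : ∀ i, D i = B i / q) :
    ∀ i, (B i : ℤ) =
      (((P' i : ℤ) - 2 ^ τ * (if i = 0 then 0 else (P' (i - 1) : ℤ))) % q) + D i * q := by
  have hq0 : 0 < q := lt_of_lt_of_le (pow_pos (by norm_num : (0:ℕ) < 2) (τ - 1)) hq1
  intro i
  have key : (((P' i : ℤ) - 2 ^ τ * (if i = 0 then 0 else (P' (i - 1) : ℤ))) % q)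
      = (B i : ℤ) % q := by
    cases i with
    | zero =>
        simp only [if_pos rfl, mul_zero, sub_zero, hP' 0, Finset.sum_range_one,
          Nat.sub_zero, Nat.zero_mul, pow_zero, one_mul]
        push_cast
        simp [Int.emod_emod_of_dvd _ dvd_rfl]
    | succ m =>
        have hsum : (∑ j ∈ Finset.range (m + 2), 2 ^ ((m + 1 - j) * τ) * B j)
            = 2 ^ τ * (∑ j ∈ Finset.range (m + 1), 2 ^ ((m - j) * τ) * B j) + B (m + 1) := by
          rw [Finset.sum_range_succ, Finset.mul_sum]
          congr 1
          · apply Finset.sum_congr rfl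
            intro j hj
            have hjm : j ≤ m := Nat.lt_succ_iff.mp (Finset.mem_range.mp hj)
            have : (m + 1 - j) * τ = τ + (m - j) * τ := by
              rw [Nat.succ_sub hjm, Nat.succ_mul, Nat.add_comm]
            rw [this, pow_add, mul_assoc]
          · simp
        simp only [if_neg (Nat.succ_ne_zero m), Nat.add_sub_cancel, hP' (m + 1), hP' m, hsum]
        push_cast
        set S : ℤ := (∑ j ∈ Finset.range (m + 1), 2 ^ ((m - j) * τ) * (B j : ℤ)) with hS
        rw [Int.sub_emod, Int.emod_emod_of_dvd _ dvd_rfl, Int.mul_emod,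
          Int.emod_emod_of_dvd _ dvd_rfl, ← Int.mul_emod, ← Int.sub_emod]
        ring_nf
  rw [key, hD]
  exact_mod_cast (Nat.mod_add_div' (B i) q).symm
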